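/- arXiv:2006.06914 — 2 statements merged into one kernel-verified Lean document; each statement's English description precedes it below -/
import Mathlib

section
/- Fixed-permutation SGD on convex L-Lipschitz losses over a convex set X ⊆ B(0,R), with any fixed permutation and nonincreasing step sizes (η_t), run for T iterations from the same initialization on two datasets differing in one of n points, satisfies ‖x^T − y^T‖ ≤ min{2R, 2L√(Σ_{t=1}^{T-1} η_t²) + (4L/n) Σ_{t=1}^{T-1} η_t}. -/
open Finset

section helpers
variable {E : Type*} [NormedAddCommGroup E] [InnerProductSpace ℝ E]

lemma my_proj_char {X : Set E} (hXconvex : Convex ℝ X) {u p : E} (hpX : p ∈ X)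
    (hmin : ∀ w ∈ X, ‖p - u‖ ≤ ‖w - u‖) : ∀ w ∈ X, (inner ℝ (u - p) (w - p) : ℝ) ≤ 0 := by
  rw [← norm_eq_iInf_iff_real_inner_le_zero hXconvex hpX]
  haveI : Nonempty X := ⟨⟨p, hpX⟩⟩
  apply le_antisymm
  · apply le_ciInf
    intro w
    rw [norm_sub_rev u p, norm_sub_rev u (w : E)]
    exact hmin w w.2
  · exact ciInf_le ⟨0, by rintro _ ⟨w, rfl⟩; exact norm_nonneg _⟩ (⟨p, hpX⟩ : X)

lemma my_proj_nonexp {X : Set E} (hXconvex : Convex ℝ X) (P : E → E)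
    (hPmem : ∀ u, P u ∈ X) (hPproj : ∀ u, ∀ w ∈ X, ‖P u - u‖ ≤ ‖w - u‖) (u v : E) :
    ‖P u - P v‖ ≤ ‖u - v‖ := by
  have h1 : (inner ℝ (u - P u) (P v - P u) : ℝ) ≤ 0 :=
    my_proj_char hXconvex (hPmem u) (hPproj u) _ (hPmem v)
  have h2 : (inner ℝ (v - P v) (P u - P v) : ℝ) ≤ 0 :=
    my_proj_char hXconvex (hPmem v) (hPproj v) _ (hPmem u)
  have key : ‖P u - P v‖ ^ 2 ≤ (inner ℝ (u - v) (P u - P v) : ℝ) := by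
    have e1 : (inner ℝ (u - P u) (P u - P v) : ℝ) ≥ 0 := by
      have : P u - P v = -(P v - P u) := by abel
      rw [this, inner_neg_right]; linarith
    have e2 : (inner ℝ (u - v) (P u - P v) : ℝ)
        = inner ℝ (u - P u) (P u - P v) + inner ℝ (P u - P v) (P u - P v)
          + inner ℝ (P v - v) (P u - P v) := by
      rw [← inner_add_left, ← inner_add_left]
      congr 1
      abel
    have e3 : (inner ℝ (P v - v) (P u - P v) : ℝ) ≥ 0 := by
      have : P v - v = -(v - P v) := by abel
      rw [this, inner_neg_left]; linarith
    rw [e2, real_inner_self_eq_norm_sq]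
    linarith
  have h3 : (inner ℝ (u - v) (P u - P v) : ℝ) ≤ ‖u - v‖ * ‖P u - P v‖ :=
    real_inner_le_norm _ _
  rcases eq_or_lt_of_le (norm_nonneg (P u - P v)) with h | h
  · rw [← h]; exact norm_nonneg _
  · nlinarith

end helpers

lemma my_step {δ' δ A B c : ℝ} (hδ' : 0 ≤ δ') (hA : 0 ≤ A) (hB : 0 ≤ B) (hc : 0 ≤ c)
    (h1 : δ ≤ A + B) (hδ : 0 ≤ δ) (h2 : δ' ^ 2 ≤ δ ^ 2 + c) :
    δ' ≤ Real.sqrt (A ^ 2 + c) + B := by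
  have hs : Real.sqrt (A ^ 2 + c) ^ 2 = A ^ 2 + c := Real.sq_sqrt (by positivity)
  have hsA : A ≤ Real.sqrt (A ^ 2 + c) := by
    nth_rewrite 1 [← Real.sqrt_sq hA]
    exact Real.sqrt_le_sqrt (by linarith)
  have hs0 : 0 ≤ Real.sqrt (A ^ 2 + c) := Real.sqrt_nonneg _
  nlinarith [sq_nonneg (δ - A - B), mul_nonneg hB (sub_nonneg.2 hsA)]

lemma my_gap {n a b i0 : ℕ} (ha : a % n = i0) (hb : b % n = i0) (hab : a < b) :
    a + n ≤ b := by
  have hmeq : a ≡ b [MOD n] := by unfold Nat.ModEq; rw [ha, hb]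
  have hdvd : n ∣ b - a := (Nat.modEq_iff_dvd' (le_of_lt hab)).1 hmeq
  have : n ≤ b - a := Nat.le_of_dvd (by omega) hdvd
  omega

lemma my_window_sum (n m i0 t0 : ℕ) (ht0p : t0 % n = i0)
    (η : ℕ → ℝ) (hη : ∀ t, 0 ≤ η t) (hmono : ∀ s t, s ≤ t → η t ≤ η s) :
    (n : ℝ) * ∑ t ∈ (Finset.Icc 1 m).filter (fun t => t % n = i0 ∧ t0 < t), η t
      ≤ ∑ t ∈ Finset.Icc 1 m, η t := by
  set F := (Finset.Icc 1 m).filter (fun t => t % n = i0 ∧ t0 < t) with hF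
  have hmemF : ∀ t ∈ F, (t ≤ m ∧ t % n = i0 ∧ t0 < t) := by
    intro t ht
    simp only [hF, Finset.mem_filter, Finset.mem_Icc] at ht
    exact ⟨ht.1.2, ht.2.1, ht.2.2⟩
  have hgap : ∀ t ∈ F, t0 + n ≤ t := fun t ht =>
    my_gap ht0p (hmemF t ht).2.1 (hmemF t ht).2.2
  set W : ℕ → Finset ℕ := fun t => Finset.Ioc (t - n) t with hW
  have hdisj : (F : Set ℕ).PairwiseDisjoint W := by
    intro a ha b hb hab
    simp only [Finset.mem_coe] at ha hb
    have h1 := hgap a ha; have h2 := hgap b hb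
    have hc : a + n ≤ b ∨ b + n ≤ a := by
      rcases lt_or_gt_of_ne hab with h | h
      · exact Or.inl (my_gap (hmemF a ha).2.1 (hmemF b hb).2.1 h)
      · exact Or.inr (my_gap (hmemF b hb).2.1 (hmemF a ha).2.1 h)
    apply Finset.disjoint_left.2
    intro s hs hs'
    simp only [hW, Finset.mem_Ioc] at hs hs'
    omega
  have hsub : F.biUnion W ⊆ Finset.Icc 1 m := by
    intro s hs
    rw [Finset.mem_biUnion] at hs
    obtain ⟨t, ht, hst⟩ := hs
    simp only [hW, Finset.mem_Ioc] at hst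
    have := hgap t ht
    have := (hmemF t ht).1
    rw [Finset.mem_Icc]
    omega
  have key : ∀ t ∈ F, (n : ℝ) * η t ≤ ∑ s ∈ W t, η s := by
    intro t ht
    have hnt := hgap t ht
    have hcard : (W t).card = n := by
      simp only [hW, Nat.card_Ioc]; omega
    calc (n : ℝ) * η t = ∑ _s ∈ W t, η t := by rw [Finset.sum_const, hcard, nsmul_eq_mul]
    _ ≤ ∑ s ∈ W t, η s := by
        apply Finset.sum_le_sum
        intro s hs
        simp only [hW, Finset.mem_Ioc] at hs
        exact hmono s t hs.2
  calc (n : ℝ) * ∑ t ∈ F, η t = ∑ t ∈ F, (n : ℝ) * η t := by rw [Finset.mul_sum]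
  _ ≤ ∑ t ∈ F, ∑ s ∈ W t, η s := Finset.sum_le_sum key
  _ = ∑ s ∈ F.biUnion W, η s := (Finset.sum_biUnion hdisj).symm
  _ ≤ ∑ t ∈ Finset.Icc 1 m, η t := Finset.sum_le_sum_of_subset_of_nonneg hsub
      (fun t _ _ => hη t)

set_option maxHeartbeats 1000000 in
/-- Uniform argument stability of fixed-permutation SGD with nonincreasing step sizes:
`‖x^T − y^T‖ ≤ min{2R, 2L√(Ση²) + (4L/n)Ση}`. -/
theorem stmt8 {d n : ℕ} (hn : 0 < n)
    (X : Set (EuclideanSpace ℝ (Fin d)))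
    (hXclosed : IsClosed X) (hXconvex : Convex ℝ X)
    (R L : ℝ) (hL : 0 ≤ L)
    (hXR : X ⊆ Metric.closedBall 0 R)
    (P : EuclideanSpace ℝ (Fin d) → EuclideanSpace ℝ (Fin d))
    (hPmem : ∀ u, P u ∈ X)
    (hPproj : ∀ u, ∀ w ∈ X, ‖P u - u‖ ≤ ‖w - u‖)
    (π : Equiv.Perm (Fin n)) (i : Fin n)
    (f f' : Fin n → EuclideanSpace ℝ (Fin d) → ℝ)
    (hdiff : ∀ j, j ≠ i → f j = f' j)
    (hconv : ∀ j, ConvexOn ℝ X (f j)) (hconv' : ∀ j, ConvexOn ℝ X (f' j))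
    (hLip : ∀ j, ∀ u ∈ X, ∀ v ∈ X, |f j u - f j v| ≤ L * ‖u - v‖)
    (hLip' : ∀ j, ∀ u ∈ X, ∀ v ∈ X, |f' j u - f' j v| ≤ L * ‖u - v‖)
    (G G' : Fin n → EuclideanSpace ℝ (Fin d) → EuclideanSpace ℝ (Fin d))
    (hG : ∀ j u, ∀ w ∈ X, f j u + (inner ℝ (G j u) (w - u) : ℝ) ≤ f j w)
    (hG' : ∀ j u, ∀ w ∈ X, f' j u + (inner ℝ (G' j u) (w - u) : ℝ) ≤ f' j w)
    (hGL : ∀ j u, ‖G j u‖ ≤ L) (hG'L : ∀ j u, ‖G' j u‖ ≤ L)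
    (hGeq : ∀ j, j ≠ i → G j = G' j)
    (T : ℕ) (hT : 1 ≤ T)
    (η : ℕ → ℝ) (hη : ∀ t, 0 ≤ η t) (hmono : ∀ s t, s ≤ t → η t ≤ η s)
    (x y : ℕ → EuclideanSpace ℝ (Fin d))
    (hx1 : x 1 = y 1) (hx1X : x 1 ∈ X)
    (hxstep : ∀ t, x (t + 1) = P (x t - η t • G (π ⟨t % n, Nat.mod_lt t hn⟩) (x t)))
    (hystep : ∀ t, y (t + 1) = P (y t - η t • G' (π ⟨t % n, Nat.mod_lt t hn⟩) (y t))) :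
    ‖x T - y T‖ ≤ min (2 * R)
      (2 * L * Real.sqrt (∑ t ∈ Finset.Icc 1 (T - 1), η t ^ 2)
        + (4 * L / n) * ∑ t ∈ Finset.Icc 1 (T - 1), η t) := by
  classical
  have hxX : ∀ t, 1 ≤ t → x t ∈ X := by
    intro t ht
    obtain ⟨s, rfl⟩ : ∃ s, t = s + 1 := ⟨t - 1, by omega⟩
    rw [hxstep]; exact hPmem _
  have hyX : ∀ t, 1 ≤ t → y t ∈ X := by
    intro t ht
    obtain ⟨s, rfl⟩ : ∃ s, t = s + 1 := ⟨t - 1, by omega⟩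
    rw [hystep]; exact hPmem _
  have hnonexp := my_proj_nonexp hXconvex P hPmem hPproj
  have hR0 : 0 ≤ R := by
    have h := hXR hx1X
    rw [Metric.mem_closedBall] at h
    exact le_trans dist_nonneg h
  set i0 : ℕ := ((π.symm i : Fin n) : ℕ) with hi0def
  have hi0n : i0 < n := (π.symm i).isLt
  set t0 : ℕ := if i0 = 0 then n else i0 with ht0def
  have ht0p : t0 % n = i0 := by
    rw [ht0def]; split_ifs with h
    · simp [Nat.mod_self, h]
    · exact Nat.mod_eq_of_lt hi0n
  have ht01 : 1 ≤ t0 := by rw [ht0def]; split_ifs with h; exacts [hn, by omega]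
  have hpertiff : ∀ t, (π ⟨t % n, Nat.mod_lt t hn⟩ = i) ↔ t % n = i0 := by
    intro t
    constructor
    · intro h; rw [hi0def, ← h, Equiv.symm_apply_apply]
    · intro h
      have he : (⟨t % n, Nat.mod_lt t hn⟩ : Fin n) = π.symm i := by
        apply Fin.ext; simpa [hi0def] using h
      rw [he, Equiv.apply_symm_apply]
  have hfirst : ∀ t, 1 ≤ t → t % n = i0 → t0 ≤ t := by
    intro t ht h
    rw [ht0def]; split_ifs with h0
    · have hd : n ∣ t := Nat.dvd_of_mod_eq_zero (by omega)
      exact Nat.le_of_dvd (by omega) hd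
    · rw [← h]; exact Nat.mod_le t n
  -- equality of trajectories up to the first perturbed step
  have heqt : ∀ t, 1 ≤ t → t ≤ t0 → x t = y t := by
    intro t
    induction t with
    | zero => intro h; omega
    | succ s IH =>
      intro _ hle
      rcases Nat.eq_zero_or_pos s with h | h
      · subst h; exact hx1
      · have hnp : ¬ (s % n = i0) := fun hc => absurd (hfirst s h hc) (by omega)
        have hji : π ⟨s % n, Nat.mod_lt s hn⟩ ≠ i := fun hc => hnp ((hpertiff s).1 hc)
        rw [hxstep, hystep, IH h (by omega), hGeq _ hji]
  -- triangle step bound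
  have hstep_tri : ∀ t, ‖x (t+1) - y (t+1)‖ ≤ ‖x t - y t‖ + 2 * L * η t := by
    intro t
    set j := π ⟨t % n, Nat.mod_lt t hn⟩ with hj
    rw [hxstep, hystep]
    have e : (x t - η t • G j (x t)) - (y t - η t • G' j (y t))
        = (x t - y t) - (η t • G j (x t) - η t • G' j (y t)) := by abel
    calc ‖P (x t - η t • G j (x t)) - P (y t - η t • G' j (y t))‖
        ≤ ‖(x t - η t • G j (x t)) - (y t - η t • G' j (y t))‖ := hnonexp _ _
    _ = ‖(x t - y t) - (η t • G j (x t) - η t • G' j (y t))‖ := by rw [e]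
    _ ≤ ‖x t - y t‖ + ‖η t • G j (x t) - η t • G' j (y t)‖ := norm_sub_le _ _
    _ ≤ ‖x t - y t‖ + 2 * L * η t := by
        have h1 : ‖η t • G j (x t) - η t • G' j (y t)‖
            ≤ ‖η t • G j (x t)‖ + ‖η t • G' j (y t)‖ := norm_sub_le _ _
        have h2 : ‖η t • G j (x t)‖ = η t * ‖G j (x t)‖ := by
          rw [norm_smul, Real.norm_eq_abs, abs_of_nonneg (hη t)]
        have h3 : ‖η t • G' j (y t)‖ = η t * ‖G' j (y t)‖ := by
          rw [norm_smul, Real.norm_eq_abs, abs_of_nonneg (hη t)]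
        have h4 := mul_le_mul_of_nonneg_left (hGL j (x t)) (hη t)
        have h5 := mul_le_mul_of_nonneg_left (hG'L j (y t)) (hη t)
        rw [h2, h3] at h1
        linarith
  -- squared step bound in unperturbed case
  have hstep_sq : ∀ t, 1 ≤ t → ¬ (t % n = i0) →
      ‖x (t+1) - y (t+1)‖ ^ 2 ≤ ‖x t - y t‖ ^ 2 + (2 * L * η t) ^ 2 := by
    intro t ht hnp
    set j := π ⟨t % n, Nat.mod_lt t hn⟩ with hj
    have hji : j ≠ i := fun hc => hnp ((hpertiff t).1 hc)
    have hGG : G' j = G j := (hGeq j hji).symm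
    rw [hxstep, hystep, hGG]
    set u := x t with hu
    set v := y t with hv
    set g := G j with hg
    have huX : u ∈ X := hxX t ht
    have hvX : v ∈ X := hyX t ht
    have hmon : (0:ℝ) ≤ inner ℝ (g u - g v) (u - v) := by
      have h1 := hG j u v hvX
      have h2 := hG j v u huX
      have e1 : (inner ℝ (g u) (v - u) : ℝ) = - inner ℝ (g u) (u - v) := by
        rw [show v - u = -(u - v) by abel, inner_neg_right]
      rw [inner_sub_left]
      rw [e1] at h1
      linarith
    have hgub : ‖g u - g v‖ ≤ 2 * L := by
      calc ‖g u - g v‖ ≤ ‖g u‖ + ‖g v‖ := norm_sub_le _ _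
      _ ≤ 2 * L := by have h1 := hGL j u; have h2 := hGL j v; linarith
    have hPle : ‖P (u - η t • g u) - P (v - η t • g v)‖
        ≤ ‖(u - v) - η t • (g u - g v)‖ := by
      have e : (u - η t • g u) - (v - η t • g v) = (u - v) - η t • (g u - g v) := by
        rw [smul_sub]; abel
      rw [← e]; exact hnonexp _ _
    have hexp : ‖(u - v) - η t • (g u - g v)‖ ^ 2
        = ‖u - v‖ ^ 2 - 2 * (η t * inner ℝ (u - v) (g u - g v)) + η t ^ 2 * ‖g u - g v‖ ^ 2 := by
      rw [norm_sub_sq_real, real_inner_smul_right, norm_smul, Real.norm_eq_abs,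
        abs_of_nonneg (hη t)]
      ring
    have hsym : (inner ℝ (u - v) (g u - g v) : ℝ) = inner ℝ (g u - g v) (u - v) :=
      real_inner_comm _ _
    have hsq2 : ‖P (u - η t • g u) - P (v - η t • g v)‖ ^ 2
        ≤ ‖(u - v) - η t • (g u - g v)‖ ^ 2 :=
      pow_le_pow_left₀ (norm_nonneg _) hPle 2
    have h4 : ‖g u - g v‖ ^ 2 ≤ (2 * L) ^ 2 := by
      nlinarith [norm_nonneg (g u - g v)]
    have h5 : η t ^ 2 * ‖g u - g v‖ ^ 2 ≤ (2 * L * η t) ^ 2 := by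
      nlinarith [sq_nonneg (η t)]
    have h6 : 0 ≤ η t * inner ℝ (u - v) (g u - g v) := by
      rw [hsym]; exact mul_nonneg (hη t) hmon
    linarith
  -- main inductive bound
  have main : ∀ S, 1 ≤ S → ‖x S - y S‖ ≤
      Real.sqrt (∑ t ∈ Finset.Icc 1 (S - 1), (2 * L * η t) ^ 2)
        + ∑ t ∈ Finset.Icc 1 (S - 1),
            (if t % n = i0 ∧ t0 < t then 2 * L * η t else 0) := by
    intro S hS
    induction S, hS using Nat.le_induction with
    | base =>
      have he : Finset.Icc 1 (1 - 1) = (∅ : Finset ℕ) := Finset.Icc_eq_empty (by omega)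
      rw [he, Finset.sum_empty, Finset.sum_empty, Real.sqrt_zero, hx1, sub_self, norm_zero]
      norm_num
    | succ S hS IH =>
      obtain ⟨S', rfl⟩ : ∃ S', S = S' + 1 := ⟨S - 1, by omega⟩
      simp only [Nat.add_sub_cancel] at IH ⊢
      rw [Finset.sum_Icc_succ_top (by omega : 1 ≤ S' + 1),
        Finset.sum_Icc_succ_top (by omega : 1 ≤ S' + 1)]
      set Sc := ∑ t ∈ Finset.Icc 1 S', (2 * L * η t) ^ 2 with hScdef
      set Sb := ∑ t ∈ Finset.Icc 1 S',
        (if t % n = i0 ∧ t0 < t then 2 * L * η t else 0) with hSbdef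
      have hSc0 : 0 ≤ Sc := Finset.sum_nonneg fun _ _ => sq_nonneg _
      have hSb0 : 0 ≤ Sb := Finset.sum_nonneg fun t _ => by
        split_ifs with h
        · exact mul_nonneg (mul_nonneg (by norm_num) hL) (hη t)
        · exact le_rfl
      have hA0 : 0 ≤ Real.sqrt Sc := Real.sqrt_nonneg _
      have hASq : Real.sqrt Sc ^ 2 = Sc := Real.sq_sqrt hSc0
      have hc0 : (0:ℝ) ≤ (2 * L * η (S' + 1)) ^ 2 := sq_nonneg _
      have hb0 : (0:ℝ) ≤ 2 * L * η (S' + 1) :=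
        mul_nonneg (mul_nonneg (by norm_num) hL) (hη _)
      by_cases hp : (S' + 1) % n = i0
      · have hge := hfirst (S' + 1) (by omega) hp
        have h1 := hstep_tri (S' + 1)
        rcases eq_or_lt_of_le hge with heq0 | hlt
        · -- first perturbed step: trajectories equal before it
          have hxy : x (S' + 1) = y (S' + 1) := heqt (S' + 1) (by omega) (le_of_eq heq0.symm)
          rw [hxy, sub_self, norm_zero, zero_add] at h1
          have hbif : (if (S' + 1) % n = i0 ∧ t0 < S' + 1 then 2 * L * η (S' + 1) else 0)
              = 0 := by rw [if_neg fun hc => absurd hc.2 (by omega)]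
          rw [hbif]
          have h2 : (2 : ℝ) * L * η (S' + 1) = Real.sqrt ((2 * L * η (S' + 1)) ^ 2) :=
            (Real.sqrt_sq hb0).symm
          have h3 : Real.sqrt ((2 * L * η (S' + 1)) ^ 2)
              ≤ Real.sqrt (Sc + (2 * L * η (S' + 1)) ^ 2) :=
            Real.sqrt_le_sqrt (by linarith)
          linarith
        · -- later perturbed step
          have hbif : (if (S' + 1) % n = i0 ∧ t0 < S' + 1 then 2 * L * η (S' + 1) else 0)
              = 2 * L * η (S' + 1) := if_pos ⟨hp, hlt⟩
          rw [hbif]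
          have h3 : Real.sqrt Sc ≤ Real.sqrt (Sc + (2 * L * η (S' + 1)) ^ 2) :=
            Real.sqrt_le_sqrt (by linarith)
          linarith
      · -- unperturbed step
        have h1 := hstep_sq (S' + 1) (by omega) hp
        have hbif : (if (S' + 1) % n = i0 ∧ t0 < S' + 1 then 2 * L * η (S' + 1) else 0)
            = 0 := by rw [if_neg fun hc => hp hc.1]
        rw [hbif]
        have h2 := my_step (norm_nonneg (x (S' + 1 + 1) - y (S' + 1 + 1))) hA0 hSb0 hc0
          IH (norm_nonneg _) h1
        rw [hASq] at h2
        linarith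
  have hmain := main T hT
  apply le_min
  · -- diameter bound
    have h1 : ‖x T‖ ≤ R := by
      have h := hXR (hxX T hT)
      rwa [Metric.mem_closedBall, dist_zero_right] at h
    have h2 : ‖y T‖ ≤ R := by
      have h := hXR (hyX T hT)
      rwa [Metric.mem_closedBall, dist_zero_right] at h
    calc ‖x T - y T‖ ≤ ‖x T‖ + ‖y T‖ := norm_sub_le _ _
    _ ≤ 2 * R := by linarith
  · -- sqrt + linear bound
    have e1 : ∑ t ∈ Finset.Icc 1 (T - 1), (2 * L * η t) ^ 2
        = (2 * L) ^ 2 * ∑ t ∈ Finset.Icc 1 (T - 1), η t ^ 2 := by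
      rw [Finset.mul_sum]
      exact Finset.sum_congr rfl fun t _ => by ring
    have e2 : Real.sqrt ((2 * L) ^ 2 * ∑ t ∈ Finset.Icc 1 (T - 1), η t ^ 2)
        = 2 * L * Real.sqrt (∑ t ∈ Finset.Icc 1 (T - 1), η t ^ 2) := by
      rw [Real.sqrt_mul (sq_nonneg _), Real.sqrt_sq (by linarith : (0:ℝ) ≤ 2 * L)]
    have e3 : ∑ t ∈ Finset.Icc 1 (T - 1),
          (if t % n = i0 ∧ t0 < t then 2 * L * η t else 0)
        = 2 * L * ∑ t ∈ (Finset.Icc 1 (T - 1)).filter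
            (fun t => t % n = i0 ∧ t0 < t), η t := by
      rw [← Finset.sum_filter, ← Finset.mul_sum]
    have hw := my_window_sum n (T - 1) i0 t0 ht0p η hη hmono
    have hsum0 : 0 ≤ ∑ t ∈ Finset.Icc 1 (T - 1), η t :=
      Finset.sum_nonneg fun t _ => hη t
    have hf0 : 0 ≤ ∑ t ∈ (Finset.Icc 1 (T - 1)).filter
        (fun t => t % n = i0 ∧ t0 < t), η t :=
      Finset.sum_nonneg fun t _ => hη t
    have hn' : (0:ℝ) < n := by exact_mod_cast hn
    have hlin : 2 * L * ∑ t ∈ (Finset.Icc 1 (T - 1)).filter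
          (fun t => t % n = i0 ∧ t0 < t), η t
        ≤ 4 * L / n * ∑ t ∈ Finset.Icc 1 (T - 1), η t := by
      rw [div_mul_eq_mul_div, le_div_iff₀ hn']
      nlinarith [mul_le_mul_of_nonneg_left hw (by linarith : (0:ℝ) ≤ 2 * L),
        mul_nonneg hL hsum0]
    calc ‖x T - y T‖ ≤ _ := hmain
    _ ≤ 2 * L * Real.sqrt (∑ t ∈ Finset.Icc 1 (T - 1), η t ^ 2)
        + 4 * L / n * ∑ t ∈ Finset.Icc 1 (T - 1), η t := by
        rw [e1, e2, e3] at *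
        linarith
    _ = _ := by ring_nf
end

section
/- Sampling-with-replacement SGD on convex L-Lipschitz losses over a convex set X ⊆ B(0,R), run for T iterations with step sizes (η_t) on two datasets differing in one of n points, has expected uniform argument stability E‖x^T − y^T‖ ≤ min{2R, 4L(√(Σ_{t=1}^{T-1} η_t²) + (1/n) Σ_{t=1}^{T-1} η_t)}, where the expectation is over the i.i.d. uniform index samples i_1, …, i_{T-1} ∈ [n]. -/
set_option maxHeartbeats 1000000

lemma proj_nonexp {F : Type*} [NormedAddCommGroup F] [InnerProductSpace ℝ F]
    {X : Set F} (hXconvex : Convex ℝ X)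
    (P : F → F)
    (hPmem : ∀ u, P u ∈ X)
    (hPproj : ∀ u, ∀ w ∈ X, ‖P u - u‖ ≤ ‖w - u‖)
    (u v : F) : ‖P u - P v‖ ≤ ‖u - v‖ := by
  have key : ∀ z, ∀ w ∈ X, (inner ℝ (z - P z) (w - P z) : ℝ) ≤ 0 := by
    intro z
    haveI : Nonempty X := ⟨⟨P z, hPmem z⟩⟩
    have heq : ‖z - P z‖ = ⨅ w : X, ‖z - w‖ := by
      refine le_antisymm (le_ciInf fun w => ?_) (ciInf_le (⟨0, ?_⟩ : BddBelow (Set.range fun w : X => ‖z - (w : F)‖)) ⟨P z, hPmem z⟩)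
      · simpa [norm_sub_rev] using hPproj z w w.2
      · rintro b ⟨w, rfl⟩; exact norm_nonneg _
    exact (norm_eq_iInf_iff_real_inner_le_zero hXconvex (hPmem z)).1 heq
  have h1 : (inner ℝ (u - P u) (P v - P u) : ℝ) ≤ 0 := key u _ (hPmem v)
  have h2 : (inner ℝ (v - P v) (P u - P v) : ℝ) ≤ 0 := key v _ (hPmem u)
  have h1' : 0 ≤ (inner ℝ (u - P u) (P u - P v) : ℝ) := by
    rw [show P u - P v = -(P v - P u) by abel, inner_neg_right]; linarith
  have key2 : (inner ℝ (u - v) (P u - P v) : ℝ) - inner ℝ (P u - P v) (P u - P v)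
      = inner ℝ (u - P u) (P u - P v) - inner ℝ (v - P v) (P u - P v) := by
    rw [← inner_sub_left, ← inner_sub_left]; congr 1; abel
  have hA : ‖P u - P v‖ ^ 2 ≤ inner ℝ (u - v) (P u - P v) := by
    rw [← real_inner_self_eq_norm_sq]; linarith
  have hB : (inner ℝ (u - v) (P u - P v) : ℝ) ≤ ‖u - v‖ * ‖P u - P v‖ :=
    real_inner_le_norm _ _
  nlinarith [norm_nonneg (P u - P v), norm_nonneg (u - v)]

/-- Expected uniform argument stability of sampling-with-replacement SGD: the expectation
(over uniform i.i.d. index samples) of `‖x^T − y^T‖` is at most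
`min{2R, 4L(√(Ση²) + (1/n)Ση)}`. -/
theorem stmt9 {d n : ℕ} (hn : 0 < n)
    (X : Set (EuclideanSpace ℝ (Fin d)))
    (hXclosed : IsClosed X) (hXconvex : Convex ℝ X)
    (R L : ℝ) (hL : 0 ≤ L)
    (hXR : X ⊆ Metric.closedBall 0 R)
    (P : EuclideanSpace ℝ (Fin d) → EuclideanSpace ℝ (Fin d))
    (hPmem : ∀ u, P u ∈ X)
    (hPproj : ∀ u, ∀ w ∈ X, ‖P u - u‖ ≤ ‖w - u‖)
    (i : Fin n)
    (f f' : Fin n → EuclideanSpace ℝ (Fin d) → ℝ)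
    (hdiff : ∀ j, j ≠ i → f j = f' j)
    (hconv : ∀ j, ConvexOn ℝ X (f j)) (hconv' : ∀ j, ConvexOn ℝ X (f' j))
    (hLip : ∀ j, ∀ u ∈ X, ∀ v ∈ X, |f j u - f j v| ≤ L * ‖u - v‖)
    (hLip' : ∀ j, ∀ u ∈ X, ∀ v ∈ X, |f' j u - f' j v| ≤ L * ‖u - v‖)
    (G G' : Fin n → EuclideanSpace ℝ (Fin d) → EuclideanSpace ℝ (Fin d))
    (hG : ∀ j u, ∀ w ∈ X, f j u + (inner ℝ (G j u) (w - u) : ℝ) ≤ f j w)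
    (hG' : ∀ j u, ∀ w ∈ X, f' j u + (inner ℝ (G' j u) (w - u) : ℝ) ≤ f' j w)
    (hGL : ∀ j u, ‖G j u‖ ≤ L) (hG'L : ∀ j u, ‖G' j u‖ ≤ L)
    (hGeq : ∀ j, j ≠ i → G j = G' j)
    (T : ℕ) (hT : 1 ≤ T)
    (η : ℕ → ℝ) (hη : ∀ t, 0 ≤ η t)
    (x y : (Fin T → Fin n) → ℕ → EuclideanSpace ℝ (Fin d))
    (x0 : EuclideanSpace ℝ (Fin d)) (hx0 : x0 ∈ X)
    (hx1 : ∀ ω, x ω 1 = x0) (hy1 : ∀ ω, y ω 1 = x0)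
    (hxstep : ∀ ω (t : ℕ) (h1 : 1 ≤ t) (ht : t < T),
      x ω (t + 1) = P (x ω t - η t • G (ω ⟨t, ht⟩) (x ω t)))
    (hystep : ∀ ω (t : ℕ) (h1 : 1 ≤ t) (ht : t < T),
      y ω (t + 1) = P (y ω t - η t • G' (ω ⟨t, ht⟩) (y ω t))) :
    (∑ ω : Fin T → Fin n, ‖x ω T - y ω T‖) / (n : ℝ) ^ T
      ≤ min (2 * R)
        (4 * L * (Real.sqrt (∑ t ∈ Finset.Icc 1 (T - 1), η t ^ 2)
          + (1 / n) * ∑ t ∈ Finset.Icc 1 (T - 1), η t)) := by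
  classical
  have hnR : (0:ℝ) < n := by exact_mod_cast hn
  have hpow : (0:ℝ) < (n:ℝ) ^ T := pow_pos hnR T
  set A := ∑ t ∈ Finset.Icc 1 (T - 1), η t ^ 2 with hAdef
  have hA0 : 0 ≤ A := Finset.sum_nonneg fun t _ => sq_nonneg _
  have hsA : 0 ≤ Real.sqrt A := Real.sqrt_nonneg A
  set r : (Fin T → Fin n) → ℕ → ℝ :=
    fun ω t => if h : t < T then (if ω ⟨t, h⟩ = i then 1 else 0) else 0 with hrdef
  have hr01 : ∀ ω t, 0 ≤ r ω t ∧ r ω t ≤ 1 := by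
    intro ω t; simp only [hrdef]; split_ifs <;> norm_num
  have hmem : ∀ ω t, 1 ≤ t → t ≤ T → x ω t ∈ X ∧ y ω t ∈ X := by
    intro ω t h1 h2
    match t, h1 with
    | 1, _ => rw [hx1, hy1]; exact ⟨hx0, hx0⟩
    | (s+2), _ =>
      have hs1 : 1 ≤ s + 1 := by omega
      have hsT : s + 1 < T := by omega
      rw [show s + 2 = (s+1) + 1 from rfl, hxstep ω (s+1) hs1 hsT, hystep ω (s+1) hs1 hsT]
      exact ⟨hPmem _, hPmem _⟩
  have h2R : ∀ ω : Fin T → Fin n, ‖x ω T - y ω T‖ ≤ 2 * R := by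
    intro ω
    obtain ⟨hxX, hyX⟩ := hmem ω T hT le_rfl
    have h1 := hXR hxX; have h2 := hXR hyX
    rw [Metric.mem_closedBall, dist_zero_right] at h1 h2
    calc ‖x ω T - y ω T‖ ≤ ‖x ω T‖ + ‖y ω T‖ := norm_sub_le _ _
    _ ≤ 2 * R := by linarith
  have path : ∀ ω : Fin T → Fin n, ‖x ω T - y ω T‖
      ≤ 2*L*Real.sqrt A + 4*L*(∑ t ∈ Finset.Icc 1 (T-1), η t * r ω t) := by
    intro ω
    set B := ∑ t ∈ Finset.Icc 1 (T-1), η t * r ω t with hBdef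
    have hB0 : 0 ≤ B :=
      Finset.sum_nonneg fun t _ => mul_nonneg (hη t) (hr01 ω t).1
    set M := 2*L*Real.sqrt A + 4*L*B with hMdef
    have hM0 : 0 ≤ M := by
      rw [hMdef]; positivity
    have hstep : ∀ t, 1 ≤ t → ∀ ht : t < T,
        ‖x ω (t+1) - y ω (t+1)‖^2
          ≤ ‖x ω t - y ω t‖^2 + 4*L^2*(η t)^2 + 4*L*(η t)*(r ω t)*‖x ω t - y ω t‖ := by
      intro t h1t htT
      obtain ⟨haX, hbX⟩ := hmem ω t h1t htT.le
      set a := x ω t with hadef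
      set b := y ω t with hbdef
      set j := ω ⟨t, htT⟩ with hjdef
      have hrt : r ω t = if j = i then 1 else 0 := by
        simp only [hrdef]; rw [dif_pos htT]
      have hnonexp : ‖x ω (t+1) - y ω (t+1)‖ ≤ ‖(a - η t • G j a) - (b - η t • G' j b)‖ := by
        rw [hxstep ω t h1t htT, hystep ω t h1t htT]
        exact proj_nonexp hXconvex P hPmem hPproj _ _
      have hsq : ‖x ω (t+1) - y ω (t+1)‖^2 ≤ ‖(a - η t • G j a) - (b - η t • G' j b)‖^2 :=
        pow_le_pow_left₀ (norm_nonneg _) hnonexp 2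
      by_cases hj : j = i
      · rw [hrt, if_pos hj]
        have e1 : (a - η t • G j a) - (b - η t • G' j b) = (a - b) - η t • (G j a - G' j b) := by
          rw [smul_sub]; abel
        have hnb : ‖(a - η t • G j a) - (b - η t • G' j b)‖ ≤ ‖a - b‖ + η t * (2*L) := by
          rw [e1]
          calc ‖(a-b) - η t • (G j a - G' j b)‖
              ≤ ‖a-b‖ + ‖η t • (G j a - G' j b)‖ := norm_sub_le _ _
          _ ≤ ‖a-b‖ + η t * (2*L) := by
              rw [norm_smul, Real.norm_eq_abs, abs_of_nonneg (hη t)]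
              have h5 := norm_sub_le (G j a) (G' j b)
              have h3 := hGL j a; have h4 := hG'L j b
              nlinarith [hη t]
        have hnb2 : ‖(a - η t • G j a) - (b - η t • G' j b)‖^2 ≤ (‖a - b‖ + η t * (2*L))^2 :=
          pow_le_pow_left₀ (norm_nonneg _) hnb 2
        nlinarith [hsq, hnb2]
      · rw [hrt, if_neg hj]
        have hGG : G' j = G j := (hGeq j hj).symm
        have e1 : (a - η t • G j a) - (b - η t • G' j b) = (a - b) - η t • (G j a - G j b) := by
          rw [hGG, smul_sub]; abel
        have hmono : 0 ≤ (inner ℝ (a - b) (G j a - G j b) : ℝ) := by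
          have m1 := hG j a b hbX
          have m2 := hG j b a haX
          have e2 : (inner ℝ (G j a) (b - a) : ℝ) = - inner ℝ (G j a) (a - b) := by
            rw [show b - a = -(a-b) by abel, inner_neg_right]
          rw [e2] at m1
          rw [inner_sub_right]
          have c1 := real_inner_comm (a - b) (G j a)
          have c2 := real_inner_comm (a - b) (G j b)
          linarith
        have hexp : ‖(a - b) - η t • (G j a - G j b)‖^2
            = ‖a-b‖^2 - 2*(η t * inner ℝ (a-b) (G j a - G j b)) + (η t)^2 * ‖G j a - G j b‖^2 := by
          rw [norm_sub_sq_real, real_inner_smul_right, norm_smul, Real.norm_eq_abs,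
            abs_of_nonneg (hη t), mul_pow]
        have hGn : ‖G j a - G j b‖ ≤ 2*L := by
          have h5 := norm_sub_le (G j a) (G j b)
          have h3 := hGL j a; have h4 := hGL j b; linarith
        have hc2 : ‖G j a - G j b‖^2 ≤ (2*L)^2 := pow_le_pow_left₀ (norm_nonneg _) hGn 2
        have hfin : (η t)^2 * ‖G j a - G j b‖^2 ≤ (η t)^2 * (2*L)^2 :=
          mul_le_mul_of_nonneg_left hc2 (sq_nonneg _)
        rw [e1] at hsq
        rw [hexp] at hsq
        nlinarith [hsq, hfin, mul_nonneg (hη t) hmono]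
    have inv : ∀ t, 1 ≤ t → t ≤ T →
        ‖x ω t - y ω t‖ ≤ M ∧
          ‖x ω t - y ω t‖^2 ≤ 4*L^2*(∑ s ∈ Finset.Icc 1 (t-1), η s ^2)
            + 4*L*M*(∑ s ∈ Finset.Icc 1 (t-1), η s * r ω s) := by
      intro t h1
      induction t, h1 using Nat.le_induction with
      | base =>
        intro _
        have hIcc : Finset.Icc 1 (1-1) = (∅ : Finset ℕ) := by
          apply Finset.Icc_eq_empty; omega
        rw [hx1, hy1, hIcc]
        simp [hM0]
      | succ t ht ih =>
        intro hle
        have htT : t < T := hle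
        obtain ⟨ihM, ihSq⟩ := ih htT.le
        have hs := hstep t ht htT
        obtain ⟨u, rfl⟩ : ∃ u, t = u + 1 := ⟨t - 1, by omega⟩
        simp only [Nat.add_sub_cancel] at ihSq ⊢
        rw [Finset.sum_Icc_succ_top (by omega : 1 ≤ u + 1) (fun s => η s ^ 2),
          Finset.sum_Icc_succ_top (by omega : 1 ≤ u + 1) (fun s => η s * r ω s)]
        have hδ0 : 0 ≤ ‖x ω (u+1) - y ω (u+1)‖ := norm_nonneg _
        have hr := hr01 ω (u+1)
        have c0 : 0 ≤ 4*L*(η (u+1))*(r ω (u+1)) :=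
          mul_nonneg (mul_nonneg (mul_nonneg (by norm_num) hL) (hη (u+1))) hr.1
        have keymul : 4*L*(η (u+1))*(r ω (u+1))*‖x ω (u+1) - y ω (u+1)‖
            ≤ 4*L*(η (u+1))*(r ω (u+1))*M := mul_le_mul_of_nonneg_left ihM c0
        have newSq : ‖x ω (u+1+1) - y ω (u+1+1)‖^2
            ≤ 4*L^2*((∑ s ∈ Finset.Icc 1 u, η s ^2) + η (u+1)^2)
              + 4*L*M*((∑ s ∈ Finset.Icc 1 u, η s * r ω s) + η (u+1) * r ω (u+1)) := by
          nlinarith [hs, ihSq, keymul]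
        refine ⟨?_, newSq⟩
        have hmon1 : (∑ s ∈ Finset.Icc 1 u, η s ^2) + η (u+1)^2 ≤ A := by
          rw [hAdef, ← Finset.sum_Icc_succ_top (by omega : 1 ≤ u + 1) (fun s => η s ^ 2)]
          exact Finset.sum_le_sum_of_subset_of_nonneg
            (Finset.Icc_subset_Icc_right (by omega)) (fun _ _ _ => sq_nonneg _)
        have hmon2 : (∑ s ∈ Finset.Icc 1 u, η s * r ω s) + η (u+1) * r ω (u+1) ≤ B := by
          rw [hBdef, ← Finset.sum_Icc_succ_top (by omega : 1 ≤ u + 1) (fun s => η s * r ω s)]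
          exact Finset.sum_le_sum_of_subset_of_nonneg
            (Finset.Icc_subset_Icc_right (by omega))
            (fun s _ _ => mul_nonneg (hη s) (hr01 ω s).1)
        have hM2 : 4*L^2*A + 4*L*M*B ≤ M^2 := by
          rw [hMdef]
          nlinarith [Real.sq_sqrt hA0, mul_nonneg (mul_nonneg (mul_nonneg hL hL) hB0) hsA]
        have hδ'2 : ‖x ω (u+1+1) - y ω (u+1+1)‖^2 ≤ M^2 := by
          nlinarith [newSq, hmon1, hmon2, hM2, mul_nonneg hL hM0, sq_nonneg L]
        nlinarith [hδ'2, hM0, norm_nonneg (x ω (u+1+1) - y ω (u+1+1))]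
    exact (inv T hT le_rfl).1
  -- counting
  have count : ∀ t ∈ Finset.Icc 1 (T-1), (∑ ω : Fin T → Fin n, r ω t) = (n:ℝ)^(T-1) := by
    intro t htmem
    rw [Finset.mem_Icc] at htmem
    have htT : t < T := by omega
    have hrt : ∀ ω : Fin T → Fin n, r ω t = if ω ⟨t, htT⟩ = i then (1:ℝ) else 0 := by
      intro ω; simp only [hrdef]; rw [dif_pos htT]
    simp_rw [hrt]
    rw [← Equiv.sum_comp (Equiv.funSplitAt (⟨t, htT⟩ : Fin T) (Fin n)).symm
      (fun ω : Fin T → Fin n => if ω ⟨t, htT⟩ = i then (1:ℝ) else 0)]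
    have happly : ∀ p : Fin n × ({j : Fin T // j ≠ ⟨t, htT⟩} → Fin n),
        ((Equiv.funSplitAt (⟨t, htT⟩ : Fin T) (Fin n)).symm p) ⟨t, htT⟩ = p.1 := by
      intro p; simp
    simp_rw [happly]
    rw [Fintype.sum_prod_type]
    dsimp only
    rw [Finset.sum_congr rfl fun x _ => Finset.sum_const (if x = i then (1:ℝ) else 0)]
    simp only [Finset.sum_const, Finset.card_univ, nsmul_eq_mul, mul_ite, mul_one, mul_zero]
    rw [Finset.sum_ite_eq' Finset.univ i
      (fun _ => (Fintype.card ({j : Fin T // j ≠ (⟨t, htT⟩ : Fin T)} → Fin n) : ℝ))]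
    simp only [Finset.mem_univ, if_true]
    have hcard : Fintype.card ({j : Fin T // j ≠ (⟨t, htT⟩ : Fin T)} → Fin n) = n ^ (T-1) := by
      rw [Fintype.card_fun, Fintype.card_fin]
      congr 1
      have : Fintype.card {j : Fin T // j ≠ (⟨t, htT⟩ : Fin T)}
          = Fintype.card (Fin T) - Fintype.card {j : Fin T // j = (⟨t, htT⟩ : Fin T)} :=
        Fintype.card_subtype_compl _
      rw [this, Fintype.card_subtype_eq, Fintype.card_fin]
    rw [hcard]
    push_cast
    ring
  have hsum_le : (∑ ω : Fin T → Fin n, ‖x ω T - y ω T‖)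
      ≤ (n:ℝ)^T * (2*L*Real.sqrt A)
        + 4*L*((∑ t ∈ Finset.Icc 1 (T-1), η t) * (n:ℝ)^(T-1)) := by
    have e1 : (∑ ω : Fin T → Fin n, ∑ t ∈ Finset.Icc 1 (T-1), η t * r ω t)
        = (∑ t ∈ Finset.Icc 1 (T-1), η t) * (n:ℝ)^(T-1) := by
      rw [Finset.sum_comm]
      rw [Finset.sum_congr rfl (fun t htm => by
        rw [← Finset.mul_sum, count t htm])]
      rw [← Finset.sum_mul]
    calc (∑ ω : Fin T → Fin n, ‖x ω T - y ω T‖)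
        ≤ ∑ ω : Fin T → Fin n,
            (2*L*Real.sqrt A + 4*L*(∑ t ∈ Finset.Icc 1 (T-1), η t * r ω t)) :=
          Finset.sum_le_sum (fun ω _ => path ω)
    _ = (Fintype.card (Fin T → Fin n) : ℝ) * (2*L*Real.sqrt A)
          + 4*L*((∑ t ∈ Finset.Icc 1 (T-1), η t) * (n:ℝ)^(T-1)) := by
        rw [Finset.sum_add_distrib, Finset.sum_const, Finset.card_univ, ← Finset.mul_sum, e1,
          nsmul_eq_mul]
    _ = (n:ℝ)^T * (2*L*Real.sqrt A)
          + 4*L*((∑ t ∈ Finset.Icc 1 (T-1), η t) * (n:ℝ)^(T-1)) := by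
        rw [Fintype.card_fun, Fintype.card_fin, Fintype.card_fin]
        push_cast
        ring
  have e2 : (n:ℝ)^(T-1) * (n:ℝ) = (n:ℝ)^T := by
    rw [← pow_succ]; congr 1; omega
  have e3 : (1/(n:ℝ)) * (n:ℝ)^T = (n:ℝ)^(T-1) := by
    rw [← e2]; field_simp
  refine le_min ?_ ?_
  · rw [div_le_iff₀ hpow]
    calc (∑ ω : Fin T → Fin n, ‖x ω T - y ω T‖)
        ≤ ∑ _ω : Fin T → Fin n, 2*R := Finset.sum_le_sum (fun ω _ => h2R ω)
    _ = (Fintype.card (Fin T → Fin n) : ℝ) * (2*R) := by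
        rw [Finset.sum_const, Finset.card_univ, nsmul_eq_mul]
    _ = 2*R * (n:ℝ)^T := by
        rw [Fintype.card_fun, Fintype.card_fin, Fintype.card_fin]; push_cast; ring
  · rw [div_le_iff₀ hpow]
    calc (∑ ω : Fin T → Fin n, ‖x ω T - y ω T‖)
        ≤ (n:ℝ)^T * (2*L*Real.sqrt A)
          + 4*L*((∑ t ∈ Finset.Icc 1 (T-1), η t) * (n:ℝ)^(T-1)) := hsum_le
    _ ≤ (n:ℝ)^T * (4*L*Real.sqrt A)
          + 4*L*((∑ t ∈ Finset.Icc 1 (T-1), η t) * (n:ℝ)^(T-1)) := by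
        nlinarith [mul_nonneg (mul_nonneg hL hsA) hpow.le]
    _ = 4*L*(Real.sqrt A + (1/n) * ∑ t ∈ Finset.Icc 1 (T-1), η t) * (n:ℝ)^T := by
        rw [← e3]; ring
end
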